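/- arXiv:2107.08346 — 4 statements merged into one kernel-verified Lean document; each statement's English description precedes it below -/
import Mathlib

section
/- Let X be a finite set partitioned into layers X_0, ..., X_H with X_H a single terminal state. Let π be a policy, P a transition kernel mapping layer h to layer h+1, and let b, ε : X×A → ℝ≥0 be nonnegative functions satisfying b(x,a) ≤ ε(x,a) + (1/H)·E_{x'∼P(·|x,a)}[V^π(x'; b)] for all (x,a), where V^π(x; f) denotes the expected sum of f along a trajectory following π and P starting from x (with V^π(x_H; f)=0). Then V^π(x_0; b) ≤ 3·V^π(x_0; ε). -/
/-- In a finite-horizon layered MDP with `H` layers, if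
`b(x,a) ≤ ε(x,a) + (1/H)·E_{x'∼P(·|x,a)}[V^π(x'; b)]` for all `(x,a)`, then
`V^π(x₀; b) ≤ 3 · V^π(x₀; ε)`. -/
theorem stmt_1
    {X A : Type*} [Fintype X] [Fintype A]
    (H : ℕ) (hH : 1 ≤ H)
    (layer : X → ℕ) (hlayer : ∀ x, layer x ≤ H)
    (x0 : X) (hx0 : layer x0 = 0)
    -- policy π : a probability distribution over actions in each state
    (π : X → A → ℝ) (hπ0 : ∀ x a, 0 ≤ π x a) (hπ1 : ∀ x, ∑ a, π x a = 1)
    -- transition kernel P, supported on the next layer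
    (P : X → A → X → ℝ) (hP0 : ∀ x a x', 0 ≤ P x a x')
    (hP1 : ∀ x a, layer x < H → ∑ x', P x a x' = 1)
    (hPlayer : ∀ x a x', P x a x' ≠ 0 → layer x' = layer x + 1)
    -- nonnegative loss functions b and ε
    (b ε : X → A → ℝ) (hb0 : ∀ x a, 0 ≤ b x a) (hε0 : ∀ x a, 0 ≤ ε x a)
    -- value functions of π under losses b and ε (Bellman equations)
    (Vb Vε : X → ℝ)
    (hVbH : ∀ x, layer x = H → Vb x = 0)
    (hVεH : ∀ x, layer x = H → Vε x = 0)
    (hVb : ∀ x, layer x < H →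
      Vb x = ∑ a, π x a * (b x a + ∑ x', P x a x' * Vb x'))
    (hVε : ∀ x, layer x < H →
      Vε x = ∑ a, π x a * (ε x a + ∑ x', P x a x' * Vε x'))
    -- the key condition relating b and ε
    (hkey : ∀ x a, layer x < H →
      b x a ≤ ε x a + (1 / (H : ℝ)) * ∑ x', P x a x' * Vb x') :
    Vb x0 ≤ 3 * Vε x0 := by
  have hHpos : (0:ℝ) < H := by exact_mod_cast hH
  have hM1 : (1:ℝ) ≤ 1 + 1 / H := by
    have : (0:ℝ) ≤ 1 / H := by positivity
    linarith
  -- Vε is nonnegative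
  have hVε0 : ∀ k x, H - layer x ≤ k → 0 ≤ Vε x := by
    intro k
    induction k with
    | zero =>
      intro x hx
      have : layer x = H := by have := hlayer x; omega
      simp [hVεH x this]
    | succ k ih =>
      intro x hx
      by_cases h : layer x = H
      · simp [hVεH x h]
      · have hlt : layer x < H := lt_of_le_of_ne (hlayer x) h
        rw [hVε x hlt]
        apply Finset.sum_nonneg; intro a _
        apply mul_nonneg (hπ0 x a)
        apply add_nonneg (hε0 x a)
        apply Finset.sum_nonneg; intro x' _
        by_cases hp : P x a x' = 0
        · simp [hp]
        · refine mul_nonneg (hP0 x a x') (ih x' ?_)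
          have := hPlayer x a x' hp; omega
  have hVb0 : ∀ k x, H - layer x ≤ k → 0 ≤ Vb x := by
    intro k
    induction k with
    | zero =>
      intro x hx
      have : layer x = H := by have := hlayer x; omega
      simp [hVbH x this]
    | succ k ih =>
      intro x hx
      by_cases h : layer x = H
      · simp [hVbH x h]
      · have hlt : layer x < H := lt_of_le_of_ne (hlayer x) h
        rw [hVb x hlt]
        apply Finset.sum_nonneg; intro a _
        apply mul_nonneg (hπ0 x a)
        apply add_nonneg (hb0 x a)
        apply Finset.sum_nonneg; intro x' _
        by_cases hp : P x a x' = 0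
        · simp [hp]
        · refine mul_nonneg (hP0 x a x') (ih x' ?_)
          have := hPlayer x a x' hp; omega
  -- main induction
  have key : ∀ k x, H - layer x ≤ k → Vb x ≤ (1 + 1/H)^(H - layer x) * Vε x := by
    intro k
    induction k with
    | zero =>
      intro x hx
      have hxe : layer x = H := by have := hlayer x; omega
      simp [hVbH x hxe, hVεH x hxe]
    | succ k ih =>
      intro x hx
      by_cases h : layer x = H
      · simp [hVbH x h, hVεH x h]
      · have hlt : layer x < H := lt_of_le_of_ne (hlayer x) h
        set M : ℝ := (1 + 1/H)^(H - (layer x + 1)) with hMdef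
        have hMge : (1:ℝ) ≤ M := one_le_pow₀ hM1
        have hCM : (1 + 1/H)^(H - layer x) = (1 + 1/H) * M := by
          rw [hMdef, ← pow_succ']
          congr 1
          omega
        rw [hVb x hlt, hVε x hlt, Finset.mul_sum]
        apply Finset.sum_le_sum
        intro a _
        have hSb : ∑ x', P x a x' * Vb x' ≤ M * ∑ x', P x a x' * Vε x' := by
          rw [Finset.mul_sum]
          apply Finset.sum_le_sum
          intro x' _
          by_cases hp : P x a x' = 0
          · simp [hp]
          · have hlx' : layer x' = layer x + 1 := hPlayer x a x' hp
            have hVb' : Vb x' ≤ (1 + 1/H)^(H - layer x') * Vε x' := by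
              apply ih; omega
            rw [hlx'] at hVb'
            calc P x a x' * Vb x' ≤ P x a x' * (M * Vε x') :=
                  mul_le_mul_of_nonneg_left hVb' (hP0 x a x')
              _ = M * (P x a x' * Vε x') := by ring
        have hSε0 : 0 ≤ ∑ x', P x a x' * Vε x' := by
          apply Finset.sum_nonneg; intro x' _
          by_cases hp : P x a x' = 0
          · simp [hp]
          · refine mul_nonneg (hP0 x a x') (hVε0 (H - layer x') x' le_rfl)
        have hSb0 : 0 ≤ ∑ x', P x a x' * Vb x' := by
          apply Finset.sum_nonneg; intro x' _
          by_cases hp : P x a x' = 0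
          · simp [hp]
          · refine mul_nonneg (hP0 x a x') (hVb0 (H - layer x') x' le_rfl)
        have hstep : b x a + ∑ x', P x a x' * Vb x'
            ≤ (1 + 1/H)^(H - layer x) * (ε x a + ∑ x', P x a x' * Vε x') := by
          rw [hCM]
          have h1 : b x a ≤ ε x a + (1/H) * ∑ x', P x a x' * Vb x' := hkey x a hlt
          have h2 : (1 + 1/H) * ∑ x', P x a x' * Vb x'
              ≤ (1 + 1/H) * (M * ∑ x', P x a x' * Vε x') := by
            apply mul_le_mul_of_nonneg_left hSb
            linarith
          have hC1 : (1:ℝ) ≤ (1 + 1/H) * M := by nlinarith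
          have h3 : ε x a ≤ (1 + 1/H) * M * ε x a := by
            nlinarith [hε0 x a]
          nlinarith
        calc π x a * (b x a + ∑ x', P x a x' * Vb x')
            ≤ π x a * ((1 + 1/H)^(H - layer x) * (ε x a + ∑ x', P x a x' * Vε x')) :=
              mul_le_mul_of_nonneg_left hstep (hπ0 x a)
          _ = (1 + 1/H)^(H - layer x) * (π x a * (ε x a + ∑ x', P x a x' * Vε x')) := by ring
  have hmain := key (H - layer x0) x0 le_rfl
  rw [hx0] at hmain
  simp only [Nat.sub_zero] at hmain
  have hpow3 : (1 + 1/(H:ℝ))^H ≤ 3 := by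
    have h1 : (1 + 1/(H:ℝ)) ≤ Real.exp (1/H) := by
      have := Real.add_one_le_exp (1/(H:ℝ))
      linarith
    have h2 : (1 + 1/(H:ℝ))^H ≤ Real.exp (1/H) ^ H := by
      apply pow_le_pow_left₀ (by positivity) h1 _
    rw [← Real.exp_nat_mul] at h2
    have hne : (H:ℝ) ≠ 0 := ne_of_gt hHpos
    have : (H:ℝ) * (1/H) = 1 := by field_simp
    rw [this] at h2
    have := Real.exp_one_lt_d9
    linarith
  have hVε00 : 0 ≤ Vε x0 := hVε0 (H - layer x0) x0 le_rfl
  calc Vb x0 ≤ (1 + 1/(H:ℝ))^H * Vε x0 := hmain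
    _ ≤ 3 * Vε x0 := mul_le_mul_of_nonneg_right hpow3 hVε00
end

section
/- In a finite-horizon layered MDP with H layers, let b : X×A → ℝ≥0 be nonnegative and define B by the dilated Bellman equation B(x,a) = b(x,a) + (1+1/H)·E_{x'∼P(·|x,a)}[Σ_{a'} π(a'|x') B(x',a')] with B(x_H,·)=0. Then for any x in layer h, Σ_a π(a|x) B(x,a) ≤ (1+1/H)^{H-h-1} · V^π(x; b), where V^π(x; b) is the value of π under loss function b. -/
/-- If `B` satisfies the dilated Bellman equation
`B(x,a) = b(x,a) + (1+1/H)·E_{x'∼P(·|x,a)}[Σ_{a'} π(a'|x') B(x',a')]` with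
`B(x_H,·) = 0`, then for `x` in layer `h`,
`Σ_a π(a|x) B(x,a) ≤ (1+1/H)^{H-h-1} · V^π(x; b)`. -/
theorem stmt_2
    {X A : Type*} [Fintype X] [Fintype A]
    (H : ℕ) (hH : 1 ≤ H)
    (layer : X → ℕ) (hlayer : ∀ x, layer x ≤ H)
    (π : X → A → ℝ) (hπ0 : ∀ x a, 0 ≤ π x a) (hπ1 : ∀ x, ∑ a, π x a = 1)
    (P : X → A → X → ℝ) (hP0 : ∀ x a x', 0 ≤ P x a x')
    (hP1 : ∀ x a, layer x < H → ∑ x', P x a x' = 1)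
    (hPlayer : ∀ x a x', P x a x' ≠ 0 → layer x' = layer x + 1)
    (b : X → A → ℝ) (hb0 : ∀ x a, 0 ≤ b x a)
    -- the dilated bonus B
    (B : X → A → ℝ)
    (hBH : ∀ x a, layer x = H → B x a = 0)
    (hB : ∀ x a, layer x < H →
      B x a = b x a + (1 + 1 / (H : ℝ)) *
        ∑ x', P x a x' * ∑ a', π x' a' * B x' a')
    -- the value function of π under loss b
    (V : X → ℝ)
    (hVH : ∀ x, layer x = H → V x = 0)
    (hV : ∀ x, layer x < H →
      V x = ∑ a, π x a * (b x a + ∑ x', P x a x' * V x'))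
    (x : X) (hx : layer x < H) :
    ∑ a, π x a * B x a ≤ (1 + 1 / (H : ℝ)) ^ (H - layer x - 1) * V x := by
  set c : ℝ := 1 + 1 / (H : ℝ) with hc
  have hc1 : (1:ℝ) ≤ c := by
    have : (0:ℝ) ≤ 1 / (H : ℝ) := by positivity
    rw [hc]; linarith
  have hc0 : (0:ℝ) ≤ c := by linarith
  have key : ∀ n (x : X), H - layer x ≤ n →
      ∑ a, π x a * B x a ≤ c ^ (H - layer x - 1) * V x := by
    intro n
    induction n with
    | zero =>
      intro x hx0
      have hxe : layer x = H := by have := hlayer x; omega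
      rw [hVH x hxe, mul_zero, Finset.sum_eq_zero]
      intro a _
      rw [hBH x a hxe, mul_zero]
    | succ n ih =>
      intro x hx0
      rcases lt_or_eq_of_le (hlayer x) with hlt | heq
      · rw [hV x hlt]
        calc ∑ a, π x a * B x a
            = ∑ a, π x a * (b x a + c * ∑ x', P x a x' * ∑ a', π x' a' * B x' a') := by
              refine Finset.sum_congr rfl fun a _ => ?_
              rw [hB x a hlt]
          _ ≤ ∑ a, π x a * (c ^ (H - layer x - 1) * (b x a + ∑ x', P x a x' * V x')) := by
              apply Finset.sum_le_sum
              intro a _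
              refine mul_le_mul_of_nonneg_left ?_ (hπ0 x a)
              rcases eq_or_lt_of_le (Nat.succ_le_of_lt hlt) with hH1 | hH2
              · -- layer x + 1 = H : successor values are all zero
                have hSW : ∑ x', P x a x' * ∑ a', π x' a' * B x' a' = 0 := by
                  apply Finset.sum_eq_zero
                  intro x' _
                  rcases eq_or_ne (P x a x') 0 with h0 | h0
                  · rw [h0, zero_mul]
                  · have hx' : layer x' = H := by rw [hPlayer x a x' h0]; omega
                    rw [Finset.sum_eq_zero, mul_zero]
                    intro a' _
                    rw [hBH x' a' hx', mul_zero]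
                have hSV : ∑ x', P x a x' * V x' = 0 := by
                  apply Finset.sum_eq_zero
                  intro x' _
                  rcases eq_or_ne (P x a x') 0 with h0 | h0
                  · rw [h0, zero_mul]
                  · have hx' : layer x' = H := by rw [hPlayer x a x' h0]; omega
                    rw [hVH x' hx', mul_zero]
                have hk0 : H - layer x - 1 = 0 := by omega
                rw [hSW, hSV, hk0, pow_zero, mul_zero, add_zero, one_mul]
              · -- layer x + 1 < H
                set k := H - layer x - 1 with hk
                have hk1 : 1 ≤ k := by omega
                have hSW : ∑ x', P x a x' * ∑ a', π x' a' * B x' a'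
                    ≤ c ^ (k - 1) * ∑ x', P x a x' * V x' := by
                  rw [Finset.mul_sum]
                  apply Finset.sum_le_sum
                  intro x' _
                  rcases eq_or_ne (P x a x') 0 with h0 | h0
                  · rw [h0, zero_mul, zero_mul, mul_zero]
                  · have hx' : layer x' = layer x + 1 := hPlayer x a x' h0
                    have hih := ih x' (by omega)
                    have hkk : H - layer x' - 1 = k - 1 := by omega
                    rw [hkk] at hih
                    calc P x a x' * ∑ a', π x' a' * B x' a'
                        ≤ P x a x' * (c ^ (k - 1) * V x') :=
                          mul_le_mul_of_nonneg_left hih (hP0 x a x')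
                      _ = c ^ (k - 1) * (P x a x' * V x') := by ring
                have hck : c * c ^ (k - 1) = c ^ k := by
                  rw [← pow_succ']
                  congr 1
                  omega
                have hbk : b x a ≤ c ^ k * b x a := by
                  have : (1:ℝ) ≤ c ^ k := one_le_pow₀ hc1
                  nlinarith [hb0 x a]
                calc b x a + c * ∑ x', P x a x' * ∑ a', π x' a' * B x' a'
                    ≤ b x a + c * (c ^ (k - 1) * ∑ x', P x a x' * V x') := by
                      have := mul_le_mul_of_nonneg_left hSW hc0
                      linarith
                  _ = b x a + c ^ k * ∑ x', P x a x' * V x' := by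
                      rw [← mul_assoc, hck]
                  _ ≤ c ^ k * (b x a + ∑ x', P x a x' * V x') := by
                      rw [mul_add]
                      linarith [hbk]
          _ = c ^ (H - layer x - 1) * ∑ a, π x a * (b x a + ∑ x', P x a x' * V x') := by
              rw [Finset.mul_sum]
              refine Finset.sum_congr rfl fun a _ => ?_
              ring
      · rw [hVH x heq, mul_zero, Finset.sum_eq_zero]
        intro a _
        rw [hBH x a heq, mul_zero]
  exact key (H - layer x) x le_rfl
end

section
/- Suppose a sequence of distributions π_1, π_2, ... over a finite action set A evolves by exponential weights: π_1 uniform, and π_{t+1}(a) ∝ π_t(a)·exp(−η ℓ_t(a)), where η > 0 and |η ℓ_t(a)| ≤ 1 for all t,a. Then for any fixed distribution π* over A, Σ_{t=1}^T Σ_a (π_t(a) − π*(a)) ℓ_t(a) ≤ (ln|A|)/η + η Σ_{t=1}^T Σ_a π_t(a) ℓ_t(a)². -/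
open Finset

private theorem exp_quad_bound {x : ℝ} (hx : |x| ≤ 1) : Real.exp x ≤ 1 + x + x ^ 2 := by
  have h := Real.exp_bound hx (n := 2) (by norm_num)
  have hs : ∑ i ∈ range 2, x ^ i / (Nat.factorial i) = 1 + x := by
    simp [Finset.sum_range_succ, Nat.factorial]
  rw [hs] at h
  have h2 := abs_le.1 h
  have hx2 : |x| ^ 2 = x ^ 2 := sq_abs x
  norm_num [Nat.factorial] at h2
  nlinarith [sq_nonneg x, h2.2]

/-- regret bound of the exponential weights algorithm. -/
theorem stmt_4
    {A : Type*} [Fintype A] [Nonempty A]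
    (η : ℝ) (hη : 0 < η)
    (T : ℕ)
    (ℓ : ℕ → A → ℝ)
    (π : ℕ → A → ℝ)
    (hπ1 : ∀ a, π 0 a = 1 / (Fintype.card A : ℝ))
    (hπrec : ∀ t a, π (t + 1) a =
      π t a * Real.exp (-η * ℓ t a) / ∑ a', π t a' * Real.exp (-η * ℓ t a'))
    (hbound : ∀ t a, |η * ℓ t a| ≤ 1)
    (πs : A → ℝ) (hπs0 : ∀ a, 0 ≤ πs a) (hπs1 : ∑ a, πs a = 1) :
    ∑ t ∈ range T, ∑ a, (π t a - πs a) * ℓ t a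
      ≤ Real.log (Fintype.card A) / η
        + η * ∑ t ∈ range T, ∑ a, π t a * (ℓ t a) ^ 2 := by
  have hn : (0:ℝ) < (Fintype.card A : ℝ) := by
    exact_mod_cast Fintype.card_pos
  -- positivity and normalization of π t
  have hps : ∀ t, (∀ a, 0 < π t a) ∧ (∑ a, π t a) = 1 := by
    intro t
    induction t with
    | zero =>
      constructor
      · intro a; rw [hπ1]; positivity
      · simp only [hπ1]
        rw [Finset.sum_const, Finset.card_univ, nsmul_eq_mul]
        field_simp
    | succ t ih =>
      obtain ⟨hp, hs⟩ := ih
      have hZ : 0 < ∑ a', π t a' * Real.exp (-η * ℓ t a') :=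
        Finset.sum_pos (fun a _ => mul_pos (hp a) (Real.exp_pos _))
          Finset.univ_nonempty
      constructor
      · intro a
        rw [hπrec]
        exact div_pos (mul_pos (hp a) (Real.exp_pos _)) hZ
      · simp only [hπrec]
        rw [← Finset.sum_div]
        exact div_self hZ.ne'
  have hpos : ∀ t a, 0 < π t a := fun t => (hps t).1
  have hsum : ∀ t, (∑ a, π t a) = 1 := fun t => (hps t).2
  set Z : ℕ → ℝ := fun t => ∑ a', π t a' * Real.exp (-η * ℓ t a') with hZdef
  have hZpos : ∀ t, 0 < Z t := fun t =>
    Finset.sum_pos (fun a _ => mul_pos (hpos t a) (Real.exp_pos _)) Finset.univ_nonempty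
  -- log Z bound
  have hlogZ : ∀ t, Real.log (Z t)
      ≤ -η * ∑ a, π t a * ℓ t a + η ^ 2 * ∑ a, π t a * (ℓ t a) ^ 2 := by
    intro t
    have h1 : Real.log (Z t) ≤ Z t - 1 := Real.log_le_sub_one_of_pos (hZpos t)
    have h2 : Z t ≤ ∑ a, π t a * (1 + (-η * ℓ t a) + (-η * ℓ t a) ^ 2) := by
      apply Finset.sum_le_sum
      intro a _
      exact mul_le_mul_of_nonneg_left
        (exp_quad_bound (by rw [neg_mul, abs_neg]; exact hbound t a)) (hpos t a).le
    have h3 : ∑ a, π t a * (1 + (-η * ℓ t a) + (-η * ℓ t a) ^ 2)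
        = (∑ a, π t a) + (-η) * (∑ a, π t a * ℓ t a)
          + η ^ 2 * (∑ a, π t a * (ℓ t a) ^ 2) := by
      rw [Finset.mul_sum, Finset.mul_sum, ← Finset.sum_add_distrib, ← Finset.sum_add_distrib]
      apply Finset.sum_congr rfl
      intro a _; ring
    rw [hsum t] at h3
    rw [h3] at h2
    linarith
  -- potential function
  set Φ : ℕ → ℝ := fun t => ∑ a, πs a * Real.log (π t a) with hΦdef
  have hstep : ∀ t, Φ (t + 1) - Φ t
      = -η * (∑ a, πs a * ℓ t a) - Real.log (Z t) := by
    intro t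
    have hlog : ∀ a, Real.log (π (t + 1) a)
        = Real.log (π t a) + (-η * ℓ t a) - Real.log (Z t) := by
      intro a
      rw [hπrec t a]
      rw [Real.log_div (mul_pos (hpos t a) (Real.exp_pos _)).ne' (hZpos t).ne',
        Real.log_mul (hpos t a).ne' (Real.exp_ne_zero _), Real.log_exp]
    have : Φ (t + 1) = ∑ a, (πs a * Real.log (π t a) + πs a * (-η * ℓ t a)
        - πs a * Real.log (Z t)) := by
      apply Finset.sum_congr rfl
      intro a _
      rw [hlog a]; ring
    rw [this, Finset.sum_sub_distrib, Finset.sum_add_distrib, ← Finset.sum_mul, hπs1]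
    have h4 : ∑ a, πs a * (-η * ℓ t a) = -η * ∑ a, πs a * ℓ t a := by
      rw [Finset.mul_sum]
      apply Finset.sum_congr rfl
      intro a _; ring
    rw [h4]
    ring
  -- per-step inequality
  have hperstep : ∀ t, η * ∑ a, (π t a - πs a) * ℓ t a
      ≤ (Φ (t + 1) - Φ t) + η ^ 2 * ∑ a, π t a * (ℓ t a) ^ 2 := by
    intro t
    have hsplit : ∑ a, (π t a - πs a) * ℓ t a
        = (∑ a, π t a * ℓ t a) - ∑ a, πs a * ℓ t a := by
      rw [← Finset.sum_sub_distrib]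
      apply Finset.sum_congr rfl
      intro a _; ring
    have h1 := hlogZ t
    have h2 := hstep t
    rw [hsplit]
    nlinarith [h1, h2]
  -- sum over t
  have hsumstep : η * ∑ t ∈ range T, ∑ a, (π t a - πs a) * ℓ t a
      ≤ (Φ T - Φ 0) + η ^ 2 * ∑ t ∈ range T, ∑ a, π t a * (ℓ t a) ^ 2 := by
    have htel : ∑ t ∈ range T, (Φ (t + 1) - Φ t) = Φ T - Φ 0 :=
      Finset.sum_range_sub Φ T
    have := Finset.sum_le_sum (fun t (_ : t ∈ range T) => hperstep t)
    rw [← Finset.mul_sum, Finset.sum_add_distrib, htel, ← Finset.mul_sum] at this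
    exact this
  -- Φ 0 = -log card
  have hΦ0 : Φ 0 = -Real.log (Fintype.card A) := by
    have : Φ 0 = ∑ a, πs a * Real.log (1 / (Fintype.card A : ℝ)) := by
      apply Finset.sum_congr rfl
      intro a _; rw [hπ1 a]
    rw [this, ← Finset.sum_mul, hπs1, one_mul, one_div, Real.log_inv]
  -- Φ T ≤ 0
  have hΦT : Φ T ≤ 0 := by
    apply Finset.sum_nonpos
    intro a _
    apply mul_nonpos_of_nonneg_of_nonpos (hπs0 a)
    apply Real.log_nonpos (hpos T a).le
    have := Finset.single_le_sum (fun a (_ : a ∈ Finset.univ) => (hpos T a).le)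
      (Finset.mem_univ a)
    rwa [hsum T] at this
  -- conclude
  set L := ∑ t ∈ range T, ∑ a, (π t a - πs a) * ℓ t a with hL
  set S := ∑ t ∈ range T, ∑ a, π t a * (ℓ t a) ^ 2 with hS
  have key : η * L ≤ Real.log (Fintype.card A) + η ^ 2 * S := by
    rw [hΦ0] at hsumstep
    linarith
  have h2 : L ≤ (Real.log (Fintype.card A) + η ^ 2 * S) / η := by
    rw [le_div_iff₀ hη]
    nlinarith [key]
  have h3 : (Real.log (Fintype.card A) + η ^ 2 * S) / η
      = Real.log (Fintype.card A) / η + η * S := by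
    field_simp
  linarith
end

section
/- Let F_0 ⊂ ... ⊂ F_n be a filtration and X_1,...,X_n real random variables with X_i measurable with respect to F_i, E[X_i | F_{i-1}] = 0, |X_i| ≤ b, and Σ_{i=1}^n E[X_i² | F_{i-1}] ≤ V for fixed b, V ≥ 0. Then for any δ ∈ (0,1), with probability at least 1−δ, Σ_{i=1}^n X_i ≤ V/b + b·log(1/δ). -/
open MeasureTheory Finset ENNReal

lemma exp_le_one_add_add_sq {y : ℝ} (hy : |y| ≤ 1) : Real.exp y ≤ 1 + y + y ^ 2 := by
  have h := Real.exp_bound hy (n := 2) (by norm_num)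
  have h2 : ∑ i ∈ Finset.range 2, y ^ i / i.factorial = 1 + y := by
    simp [Finset.sum_range_succ]
  rw [h2] at h
  norm_num [Nat.factorial] at h
  have := abs_le.mp h
  nlinarith [sq_abs y, sq_nonneg y]

/-- a special form of Freedman's inequality. -/
theorem stmt_5
    {Ω : Type*} {m0 : MeasurableSpace Ω} (μ : Measure Ω) [IsProbabilityMeasure μ]
    (ℱ : Filtration ℕ m0)
    (n : ℕ) (X : ℕ → Ω → ℝ)
    (b V : ℝ) (hb : 0 ≤ b) (hV : 0 ≤ V)
    (hadapted : ∀ i ∈ Icc 1 n, StronglyMeasurable[ℱ i] (X i))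
    (hmean : ∀ i ∈ Icc 1 n, μ[X i|ℱ (i - 1)] =ᵐ[μ] 0)
    (hbdd : ∀ i ∈ Icc 1 n, ∀ᵐ ω ∂μ, |X i ω| ≤ b)
    (hvar : ∀ᵐ ω ∂μ, ∑ i ∈ Icc 1 n, (μ[X i ^ 2|ℱ (i - 1)]) ω ≤ V)
    (δ : ℝ) (hδ : δ ∈ Set.Ioo (0 : ℝ) 1) :
    ENNReal.ofReal (1 - δ)
      ≤ μ {ω | ∑ i ∈ Icc 1 n, X i ω ≤ V / b + b * Real.log (1 / δ)} := by
  obtain ⟨hδ0, hδ1⟩ := hδ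
  set t := V / b + b * Real.log (1 / δ) with ht
  have hbddall : ∀ᵐ ω ∂μ, ∀ i, i ∈ Icc 1 n → |X i ω| ≤ b := by
    rw [ae_all_iff]
    intro i
    by_cases hi : i ∈ Icc 1 n
    · exact (hbdd i hi).mono fun ω hω _ => hω
    · exact ae_of_all _ fun ω h => absurd h hi
  -- common ending
  suffices hbad : μ {ω | t < ∑ i ∈ Icc 1 n, X i ω} ≤ ENNReal.ofReal δ by
    have hcover : (1 : ℝ≥0∞) ≤ μ {ω | ∑ i ∈ Icc 1 n, X i ω ≤ t}
        + μ {ω | t < ∑ i ∈ Icc 1 n, X i ω} := by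
      calc (1 : ℝ≥0∞) = μ Set.univ := measure_univ.symm
        _ ≤ μ ({ω | ∑ i ∈ Icc 1 n, X i ω ≤ t} ∪ {ω | t < ∑ i ∈ Icc 1 n, X i ω}) :=
            measure_mono fun ω _ => (le_or_gt (∑ i ∈ Icc 1 n, X i ω) t).imp id id
        _ ≤ _ := measure_union_le _ _
    have h1 : ENNReal.ofReal (1 - δ) + ENNReal.ofReal δ
        ≤ μ {ω | ∑ i ∈ Icc 1 n, X i ω ≤ t} + ENNReal.ofReal δ := by
      rw [← ENNReal.ofReal_add (by linarith) hδ0.le]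
      norm_num
      calc (1 : ℝ≥0∞) ≤ _ := hcover
        _ ≤ _ := add_le_add le_rfl hbad
    exact (ENNReal.add_le_add_iff_right ENNReal.ofReal_ne_top).mp h1
  rcases eq_or_lt_of_le hb with hb0 | hb0
  · -- degenerate case b = 0
    subst hb0
    have hz0 : μ {ω | t < ∑ i ∈ Icc 1 n, X i ω} = 0 := by
      apply measure_eq_zero_iff_ae_notMem.mpr
      filter_upwards [hbddall] with ω h
      simp only [Set.mem_setOf_eq, not_lt]
      have hz : ∑ i ∈ Icc 1 n, X i ω = 0 :=
        Finset.sum_eq_zero fun i hi => abs_nonpos_iff.mp (h i hi)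
      rw [hz, ht]
      simp
    rw [hz0]; exact zero_le
  · -- main case 0 < b
    have hbne : b ≠ 0 := ne_of_gt hb0
    have hXsub : ∀ {k i : ℕ}, k ≤ n → i ∈ Icc 1 k → i ∈ Icc 1 n := by
      intro k i hk hi; rw [mem_Icc] at *; omega
    set q : ℕ → Ω → ℝ := fun i => μ[X i ^ 2|ℱ (i - 1)] with hqdef
    have hqnnall : ∀ᵐ ω ∂μ, ∀ i, 0 ≤ q i ω := by
      rw [ae_all_iff]
      intro i
      exact condExp_nonneg (ae_of_all _ fun ω => sq_nonneg (X i ω))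
    set M : ℕ → Ω → ℝ := fun k ω =>
      Real.exp (∑ i ∈ Icc 1 k, X i ω / b - ∑ i ∈ Icc 1 k, q i ω / b ^ 2) with hMdef
    have hMsm : ∀ k, k ≤ n → StronglyMeasurable[ℱ k] (M k) := by
      intro k hk
      apply Continuous.comp_stronglyMeasurable Real.continuous_exp
      apply StronglyMeasurable.sub
      · apply Finset.stronglyMeasurable_fun_sum
        intro i hi
        have := ((hadapted i (hXsub hk hi)).mono (ℱ.mono (mem_Icc.1 hi).2)).mul_const b⁻¹
        simpa [div_eq_mul_inv] using this
      · apply Finset.stronglyMeasurable_fun_sum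
        intro i hi
        have h1 : i - 1 ≤ k := by have := (mem_Icc.1 hi).2; omega
        have h2 : StronglyMeasurable[ℱ k] (fun ω => q i ω * (b ^ 2)⁻¹) :=
          StronglyMeasurable.mul_const (stronglyMeasurable_condExp.mono (ℱ.mono h1)) _
        simpa [div_eq_mul_inv] using h2
    have hMbd : ∀ k, k ≤ n → ∀ᵐ ω ∂μ, ‖M k ω‖ ≤ Real.exp k := by
      intro k hk
      filter_upwards [hbddall, hqnnall] with ω h1 h2
      rw [Real.norm_eq_abs, abs_of_pos (Real.exp_pos _), Real.exp_le_exp]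
      have hs1 : ∑ i ∈ Icc 1 k, X i ω / b ≤ (k : ℝ) := by
        calc ∑ i ∈ Icc 1 k, X i ω / b ≤ ∑ _i ∈ Icc 1 k, (1 : ℝ) := by
              apply Finset.sum_le_sum
              intro i hi
              rw [div_le_one hb0]
              exact (abs_le.mp (h1 i (hXsub hk hi))).2
          _ ≤ (k : ℝ) := by simp [Nat.card_Icc]
      have hs2 : (0 : ℝ) ≤ ∑ i ∈ Icc 1 k, q i ω / b ^ 2 :=
        Finset.sum_nonneg fun i _ => div_nonneg (h2 i) (sq_nonneg b)
      linarith
    have hMint : ∀ k, k ≤ n → Integrable (M k) μ := fun k hk =>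
      Integrable.mono' (integrable_const (Real.exp k))
        ((hMsm k hk).mono (ℱ.le k)).aestronglyMeasurable (hMbd k hk)
    have hXint : ∀ i ∈ Icc 1 n, Integrable (X i) μ := by
      intro i hi
      refine Integrable.mono' (integrable_const b)
        ((hadapted i hi).mono (ℱ.le i)).aestronglyMeasurable ?_
      exact (hbdd i hi).mono fun ω h => by rwa [Real.norm_eq_abs]
    have hX2int : ∀ i ∈ Icc 1 n, Integrable (X i ^ 2) μ := by
      intro i hi
      have hsm : StronglyMeasurable (X i ^ 2) := by
        rw [pow_two]
        exact ((hadapted i hi).mono (ℱ.le i)).mul ((hadapted i hi).mono (ℱ.le i))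
      refine Integrable.mono' (integrable_const (b ^ 2)) hsm.aestronglyMeasurable ?_
      filter_upwards [hbdd i hi] with ω h
      rw [Pi.pow_apply, Real.norm_eq_abs, abs_pow]
      exact pow_le_pow_left₀ (abs_nonneg _) h 2
    have key : ∀ k, k ≤ n → ∫ ω, M k ω ∂μ ≤ 1 := by
      intro k
      induction k with
      | zero =>
        intro _
        simp only [hMdef]
        simp
      | succ k ih =>
        intro hk1
        have hk : k ≤ n := Nat.le_of_succ_le hk1
        have hmem : k + 1 ∈ Icc 1 n := mem_Icc.mpr ⟨Nat.le_add_left 1 k, hk1⟩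
        have hq1sm : StronglyMeasurable[ℱ k] (q (k + 1)) := stronglyMeasurable_condExp
        set f : Ω → ℝ := fun ω => M k ω * Real.exp (-(q (k + 1) ω / b ^ 2)) with hfdef
        set g : Ω → ℝ := fun ω => Real.exp (X (k + 1) ω / b) with hgdef
        have hfg : M (k + 1) = f * g := by
          funext ω
          simp only [hMdef, hfdef, hgdef, Pi.mul_apply]
          rw [← Real.exp_add, ← Real.exp_add]
          congr 1
          rw [Finset.sum_Icc_succ_top (Nat.le_add_left 1 k),
            Finset.sum_Icc_succ_top (Nat.le_add_left 1 k)]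
          ring
        have hqdiv : StronglyMeasurable[ℱ k] (fun ω => -(q (k + 1) ω / b ^ 2)) := by
          simpa [div_eq_mul_inv, Pi.neg_def] using (hq1sm.mul_const ((b ^ 2)⁻¹)).neg
        have hfsm : StronglyMeasurable[ℱ k] f :=
          (hMsm k hk).mul (Real.continuous_exp.comp_stronglyMeasurable hqdiv)
        have hgint : Integrable g μ := by
          have hXdiv : StronglyMeasurable (fun ω => X (k + 1) ω / b) := by
            simpa [div_eq_mul_inv] using ((hadapted _ hmem).mono (ℱ.le _)).mul_const b⁻¹
          refine Integrable.mono' (integrable_const (Real.exp 1))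
            (Real.continuous_exp.comp_stronglyMeasurable hXdiv).aestronglyMeasurable ?_
          filter_upwards [hbdd _ hmem] with ω h
          simp only [hgdef]
          rw [Real.norm_eq_abs, abs_of_pos (Real.exp_pos _), Real.exp_le_exp, div_le_one hb0]
          exact (abs_le.mp h).2
        have hfgint : Integrable (f * g) μ := hfg ▸ hMint (k + 1) hk1
        have hXi := hXint _ hmem
        have hX2i := hX2int _ hmem
        have hcond : μ[g|ℱ k] ≤ᵐ[μ] fun ω => Real.exp (q (k + 1) ω / b ^ 2) := by
          set u : Ω → ℝ := (fun _ => (1 : ℝ)) + b⁻¹ • X (k + 1) + (b ^ 2)⁻¹ • X (k + 1) ^ 2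
            with hudef
          have huint : Integrable u μ :=
            ((integrable_const _).add (hXi.smul b⁻¹)).add (hX2i.smul ((b ^ 2)⁻¹))
          have hgu : g ≤ᵐ[μ] u := by
            filter_upwards [hbdd _ hmem] with ω h
            have h1 : |X (k + 1) ω / b| ≤ 1 := by
              rw [abs_div, abs_of_pos hb0, div_le_one hb0]; exact h
            have h2 := exp_le_one_add_add_sq h1
            simp only [hgdef, hudef, Pi.add_apply, Pi.smul_apply, smul_eq_mul, Pi.pow_apply,
              Pi.one_apply]
            calc Real.exp (X (k + 1) ω / b) ≤ 1 + X (k + 1) ω / b + (X (k + 1) ω / b) ^ 2 := h2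
              _ = 1 + b⁻¹ * X (k + 1) ω + (b ^ 2)⁻¹ * X (k + 1) ω ^ 2 := by
                  field_simp
          have h2 : μ[g|ℱ k] ≤ᵐ[μ] μ[u|ℱ k] := condExp_mono hgint huint hgu
          have e1 : μ[u|ℱ k] =ᵐ[μ]
              μ[(fun _ => (1 : ℝ)) + b⁻¹ • X (k + 1)|ℱ k] + μ[(b ^ 2)⁻¹ • X (k + 1) ^ 2|ℱ k] :=
            condExp_add ((integrable_const _).add (hXi.smul _)) (hX2i.smul _) (ℱ k)
          have e2 : μ[(fun _ => (1 : ℝ)) + b⁻¹ • X (k + 1)|ℱ k] =ᵐ[μ]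
              μ[(fun _ => (1 : ℝ))|ℱ k] + μ[b⁻¹ • X (k + 1)|ℱ k] :=
            condExp_add (integrable_const _) (hXi.smul _) (ℱ k)
          have e3 : μ[(fun _ => (1 : ℝ))|ℱ k] = fun _ => (1 : ℝ) := condExp_const (ℱ.le k) 1
          have e4 : μ[b⁻¹ • X (k + 1)|ℱ k] =ᵐ[μ] b⁻¹ • μ[X (k + 1)|ℱ k] :=
            condExp_smul b⁻¹ (X (k + 1)) (ℱ k)
          have e5 : μ[X (k + 1)|ℱ k] =ᵐ[μ] 0 := hmean (k + 1) hmem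
          have e6 : μ[(b ^ 2)⁻¹ • X (k + 1) ^ 2|ℱ k] =ᵐ[μ] (b ^ 2)⁻¹ • q (k + 1) :=
            condExp_smul ((b ^ 2)⁻¹) (X (k + 1) ^ 2) (ℱ k)
          filter_upwards [h2, e1, e2, e4, e5, e6, hqnnall] with ω w2 w1 we2 w4 w5 w6 w7
          have hval : (μ[u|ℱ k]) ω = 1 + (b ^ 2)⁻¹ * q (k + 1) ω := by
            rw [w1]
            simp only [Pi.add_apply, Pi.smul_apply, smul_eq_mul] at we2 w4 w6 ⊢
            rw [we2, w4, w6, e3, w5]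
            simp
          calc (μ[g|ℱ k]) ω ≤ (μ[u|ℱ k]) ω := w2
            _ = 1 + (b ^ 2)⁻¹ * q (k + 1) ω := hval
            _ ≤ Real.exp (q (k + 1) ω / b ^ 2) := by
                have := Real.add_one_le_exp ((b ^ 2)⁻¹ * q (k + 1) ω)
                rw [div_eq_inv_mul]
                linarith
        have hpull : μ[f * g|ℱ k] =ᵐ[μ] f * μ[g|ℱ k] :=
          condExp_mul_of_stronglyMeasurable_left hfsm hfgint hgint
        have hle : μ[M (k + 1)|ℱ k] ≤ᵐ[μ] M k := by
          rw [hfg]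
          filter_upwards [hpull, hcond] with ω w1 w2
          rw [w1]
          have hfpos : 0 ≤ f ω := by
            simp only [hfdef]
            positivity
          calc (f * μ[g|ℱ k]) ω = f ω * (μ[g|ℱ k]) ω := rfl
            _ ≤ f ω * Real.exp (q (k + 1) ω / b ^ 2) := mul_le_mul_of_nonneg_left w2 hfpos
            _ = M k ω := by
                simp only [hfdef]
                rw [mul_assoc, ← Real.exp_add]
                simp
        calc ∫ ω, M (k + 1) ω ∂μ = ∫ ω, (μ[M (k + 1)|ℱ k]) ω ∂μ :=
              (integral_condExp (ℱ.le k)).symm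
          _ ≤ ∫ ω, M k ω ∂μ := integral_mono_ae integrable_condExp (hMint k hk) hle
          _ ≤ 1 := ih hk
    -- Markov step
    have hMn_nn : 0 ≤ᵐ[μ] M n := ae_of_all _ fun ω => (Real.exp_pos _).le
    have hmarkov := mul_meas_ge_le_integral_of_nonneg hMn_nn (hMint n le_rfl) (1 / δ)
    have hone := key n le_rfl
    have htoReal : (μ {ω | 1 / δ ≤ M n ω}).toReal ≤ δ := by
      have h' := le_trans hmarkov hone
      rwa [div_mul_eq_mul_div, one_mul, div_le_one hδ0] at h'
    have hle2 : μ {ω | 1 / δ ≤ M n ω} ≤ ENNReal.ofReal δ :=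
      (ENNReal.le_ofReal_iff_toReal_le (measure_ne_top μ _) hδ0.le).mpr htoReal
    refine le_trans (measure_mono_ae ?_) hle2
    filter_upwards [hvar, hqnnall] with ω hv hq
    intro hlt
    show 1 / δ ≤ M n ω
    have hQ : ∑ i ∈ Icc 1 n, q i ω / b ^ 2 ≤ V / b ^ 2 := by
      rw [← Finset.sum_div]
      gcongr
    have hS : V / b ^ 2 + Real.log (1 / δ) < ∑ i ∈ Icc 1 n, X i ω / b := by
      rw [← Finset.sum_div, lt_div_iff₀ hb0]
      calc (V / b ^ 2 + Real.log (1 / δ)) * b = V / b + b * Real.log (1 / δ) := by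
            field_simp
        _ < _ := hlt
    calc 1 / δ = Real.exp (Real.log (1 / δ)) := (Real.exp_log (by positivity)).symm
      _ ≤ M n ω := by
          simp only [hMdef]
          rw [Real.exp_le_exp]
          linarith
end
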